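/- Fix integers d ≥ 3 and ℓ ≥ 1, and let 𝒳_ℓ be the ball of radius ℓ in the infinite d-regular tree, with root o, normalized adjacency matrix H_{𝒳_ℓ} and leaf indicator 𝕀∂. For every z ∈ ℂ with Im z > 0, the matrix H_{𝒳_ℓ} − z·I − m_sc(z)·𝕀∂ is invertible, and its inverse P satisfies, for all vertices i, j of 𝒳_ℓ, P_{ij} = m_d(z) · (−m_sc(z)/√(d−1))^{dist(i,j)}, where dist denotes the graph distance in 𝒳_ℓ. -/

import Mathlib

open scoped Classical

noncomputable section

/-- Vertices of the ball of radius `ℓ` in the infinite `m`-ary rooted tree: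
words over `Fin m` of length at most `ℓ`. -/
def TreeBallY (m ℓ : ℕ) : Type := {l : List (Fin m) // l.length ≤ ℓ}

instance (m ℓ : ℕ) : DecidableEq (TreeBallY m ℓ) :=
  inferInstanceAs (DecidableEq {l : List (Fin m) // l.length ≤ ℓ})

instance (m ℓ : ℕ) : Fintype (TreeBallY m ℓ) :=
  Fintype.ofSurjective
    (fun p : (Σ k : Fin (ℓ + 1), List.Vector (Fin m) k) =>
      (⟨p.2.toList, by
        have h1 : p.2.toList.length = (p.1 : ℕ) := p.2.toList_length
        have h2 := p.1.isLt
        omega⟩ : TreeBallY m ℓ))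
    (fun l => ⟨⟨⟨l.1.length, Nat.lt_succ_of_le l.2⟩, ⟨l.1, rfl⟩⟩, rfl⟩)

/-- The tree structure on the ball of radius `ℓ` of the `m`-ary rooted tree:
`x` is adjacent to `y` iff one of them is obtained from the other by appending one letter
(i.e. one is the parent of the other). -/
def treeGraphY (m ℓ : ℕ) : SimpleGraph (TreeBallY m ℓ) :=
  SimpleGraph.fromRel (fun x y => ∃ a : Fin m, y.1 = x.1 ++ [a])

/-- The root of the tree: the empty word. -/
def rootY (m ℓ : ℕ) : TreeBallY m ℓ := ⟨[], Nat.zero_le _⟩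

/-- The normalized adjacency matrix `A/√(d-1)` of the ball `𝒴_ℓ` of radius `ℓ` in the
infinite `(d-1)`-ary tree. -/
def HmatY (d ℓ : ℕ) : Matrix (TreeBallY (d - 1) ℓ) (TreeBallY (d - 1) ℓ) ℂ :=
  fun x y => if (treeGraphY (d - 1) ℓ).Adj x y then (Real.sqrt ((d : ℝ) - 1) : ℂ)⁻¹ else 0

/-- The leaf indicator `𝕀∂` of `𝒴_ℓ`: the diagonal 0-1 matrix whose entry at `x` is `1`
exactly when `dist(x, o) = ℓ`. -/
def IbdY (d ℓ : ℕ) : Matrix (TreeBallY (d - 1) ℓ) (TreeBallY (d - 1) ℓ) ℂ :=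
  Matrix.diagonal (fun x => if (treeGraphY (d - 1) ℓ).dist (rootY (d - 1) ℓ) x = ℓ then 1 else 0)

/-- Vertices of the ball `𝒳_ℓ` of radius `ℓ` in the infinite `d`-regular tree: the root
(`none`), or a first step in `Fin d` followed by a word over `Fin (d-1)` of length at most
`ℓ - 1`. -/
def TreeBallX (d ℓ : ℕ) : Type := Option (Fin d × TreeBallY (d - 1) (ℓ - 1))

instance (d ℓ : ℕ) : DecidableEq (TreeBallX d ℓ) :=
  inferInstanceAs (DecidableEq (Option (Fin d × TreeBallY (d - 1) (ℓ - 1))))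

instance (d ℓ : ℕ) : Fintype (TreeBallX d ℓ) :=
  inferInstanceAs (Fintype (Option (Fin d × TreeBallY (d - 1) (ℓ - 1))))

/-- The tree structure on the ball `𝒳_ℓ` of radius `ℓ` of the `d`-regular tree: the root is
adjacent to the `d` one-step vertices, and within each branch two vertices are adjacent iff one
is the parent of the other. -/
def treeGraphX (d ℓ : ℕ) : SimpleGraph (TreeBallX d ℓ) :=
  SimpleGraph.fromRel (fun x y =>
    (∃ a : Fin d, x = none ∧ y = some (a, ⟨[], Nat.zero_le _⟩)) ∨
    (∃ (a : Fin d) (s t : TreeBallY (d - 1) (ℓ - 1)),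
      x = some (a, s) ∧ y = some (a, t) ∧ ∃ b : Fin (d - 1), t.1 = s.1 ++ [b]))

/-- The root of the `d`-regular tree ball `𝒳_ℓ`. -/
def rootX (d ℓ : ℕ) : TreeBallX d ℓ := none

/-- The normalized adjacency matrix `A/√(d-1)` of the ball `𝒳_ℓ` of radius `ℓ` in the
infinite `d`-regular tree. -/
def HmatX (d ℓ : ℕ) : Matrix (TreeBallX d ℓ) (TreeBallX d ℓ) ℂ :=
  fun x y => if (treeGraphX d ℓ).Adj x y then (Real.sqrt ((d : ℝ) - 1) : ℂ)⁻¹ else 0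

/-- The leaf indicator `𝕀∂` of `𝒳_ℓ`. -/
def IbdX (d ℓ : ℕ) : Matrix (TreeBallX d ℓ) (TreeBallX d ℓ) ℂ :=
  Matrix.diagonal (fun x => if (treeGraphX d ℓ).dist (rootX d ℓ) x = ℓ then 1 else 0)

/-- Longest common prefix of two words. -/
def lcp {m : ℕ} : List (Fin m) → List (Fin m) → List (Fin m)
  | [], _ => []
  | _ :: _, [] => []
  | a :: s, b :: t => if a = b then a :: lcp s t else []

theorem lcp_length_le_left {m : ℕ} : ∀ s t : List (Fin m), (lcp s t).length ≤ s.length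
  | [], _ => by simp [lcp]
  | _ :: _, [] => by simp [lcp]
  | a :: s, b :: t => by
    by_cases h : a = b
    · simp only [lcp, if_pos h, List.length_cons]
      exact Nat.succ_le_succ (lcp_length_le_left s t)
    · simp [lcp, h]

/-- The least common ancestor of two vertices of `𝒴_ℓ`: their longest common prefix. -/
def lcaY {m ℓ : ℕ} (x y : TreeBallY m ℓ) : TreeBallY m ℓ :=
  ⟨lcp x.1 y.1, le_trans (lcp_length_le_left _ _) x.2⟩

/-- `anc(x,y)`: the distance from the least common ancestor of `x` and `y` to the root `o`. -/
def ancY {m ℓ : ℕ} (x y : TreeBallY m ℓ) : ℕ :=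
  (treeGraphY m ℓ).dist (rootY m ℓ) (lcaY x y)

end


namespace GreenAux

def lcpL : List ℕ → List ℕ → List ℕ
  | [], _ => []
  | _ :: _, [] => []
  | a :: s, b :: t => if a = b then a :: lcpL s t else []

theorem lcpL_prefix_left : ∀ s t : List ℕ, lcpL s t <+: s
  | [], _ => List.prefix_rfl
  | _ :: _, [] => List.nil_prefix
  | a :: s, b :: t => by
    by_cases h : a = b
    · simpa [lcpL, h] using lcpL_prefix_left s t
    · simp [lcpL, h]

theorem lcpL_prefix_right : ∀ s t : List ℕ, lcpL s t <+: t
  | [], _ => List.nil_prefix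
  | _ :: _, [] => List.prefix_rfl
  | a :: s, b :: t => by
    by_cases h : a = b
    · subst h; simpa [lcpL] using lcpL_prefix_right s t
    · simp [lcpL, h]

theorem prefix_lcpL : ∀ {s t p : List ℕ}, p <+: s → p <+: t → p <+: lcpL s t
  | _, _, [], _, _ => List.nil_prefix
  | [], _, _ :: _, hs, _ => by simp at hs
  | _ :: _, [], _ :: _, _, ht => by simp at ht
  | a :: s, b :: t, c :: p, hs, ht => by
    rw [List.cons_prefix_cons] at hs ht
    obtain ⟨rfl, hs⟩ := hs
    obtain ⟨rfl, ht⟩ := ht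
    have heq : lcpL (c :: s) (c :: t) = c :: lcpL s t := by simp [lcpL]
    rw [heq, List.cons_prefix_cons]
    exact ⟨rfl, prefix_lcpL hs ht⟩

theorem lcpL_eq_of_prefix {s t : List ℕ} (h : t <+: s) : lcpL s t = t :=
  (lcpL_prefix_right s t).eq_of_length (Nat.le_antisymm
    ((lcpL_prefix_right s t).length_le) ((prefix_lcpL h List.prefix_rfl).length_le))

theorem lcpL_self (s : List ℕ) : lcpL s s = s := lcpL_eq_of_prefix List.prefix_rfl

theorem lcpL_comm (s t : List ℕ) : lcpL s t = lcpL t s := by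
  have h1 : lcpL s t <+: lcpL t s :=
    prefix_lcpL (lcpL_prefix_right s t) (lcpL_prefix_left s t)
  have h2 : lcpL t s <+: lcpL s t :=
    prefix_lcpL (lcpL_prefix_right t s) (lcpL_prefix_left t s)
  exact h1.eq_of_length (Nat.le_antisymm h1.length_le h2.length_le)

theorem lcpL_nil_left (t : List ℕ) : lcpL [] t = [] := rfl

theorem lcpL_nil_right (s : List ℕ) : lcpL s [] = [] := by cases s <;> rfl

theorem prefix_concat_iff' {p t : List ℕ} {c : ℕ} :
    p <+: t ++ [c] ↔ p <+: t ∨ p = t ++ [c] := by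
  constructor
  · intro h
    rcases Nat.lt_or_ge p.length (t ++ [c]).length with hl | hl
    · left
      have hp : p.length ≤ t.length := by
        simp only [List.length_append, List.length_singleton] at hl; omega
      have h2 := List.prefix_iff_eq_take.mp h
      rw [List.take_append_of_le_length hp] at h2
      exact h2 ▸ List.take_prefix _ t
    · right
      exact h.eq_of_length (Nat.le_antisymm h.length_le hl)
  · rintro (h | rfl)
    · exact h.trans (List.prefix_append t [c])
    · exact List.prefix_rfl

theorem lcpL_concat (s t : List ℕ) (c : ℕ) :
    lcpL s (t ++ [c]) = if t ++ [c] <+: s then t ++ [c] else lcpL s t := by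
  split_ifs with h
  · exact (lcpL_prefix_right s (t ++ [c])).eq_of_length (Nat.le_antisymm
      (lcpL_prefix_right s (t ++ [c])).length_le
      (prefix_lcpL h List.prefix_rfl).length_le)
  · have h1 : lcpL s t <+: lcpL s (t ++ [c]) :=
      prefix_lcpL (lcpL_prefix_left s t)
        ((lcpL_prefix_right s t).trans (List.prefix_append t [c]))
    have h2 : lcpL s (t ++ [c]) <+: lcpL s t := by
      refine prefix_lcpL (lcpL_prefix_left _ _) ?_
      rcases prefix_concat_iff'.mp (lcpL_prefix_right s (t ++ [c])) with h' | h'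
      · exact h'
      · exact absurd (h' ▸ lcpL_prefix_left s (t ++ [c])) h
    exact h2.eq_of_length (Nat.le_antisymm h2.length_le h1.length_le)

/-- Tree distance between two words. -/
def dL (s t : List ℕ) : ℕ := s.length + t.length - 2 * (lcpL s t).length

theorem dL_self (s : List ℕ) : dL s s = 0 := by simp [dL, lcpL_self]; omega

theorem dL_comm (s t : List ℕ) : dL s t = dL t s := by
  rw [dL, dL, lcpL_comm, Nat.add_comm]

theorem dL_nil_left (t : List ℕ) : dL [] t = t.length := by simp [dL, lcpL_nil_left]

theorem dL_eq_zero_iff {s t : List ℕ} : dL s t = 0 ↔ s = t := by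
  constructor
  · intro h
    have h1 := (lcpL_prefix_left s t).length_le
    have h2 := (lcpL_prefix_right s t).length_le
    rw [dL] at h
    have e1 : (lcpL s t).length = s.length := by omega
    have e2 : (lcpL s t).length = t.length := by omega
    exact ((lcpL_prefix_left s t).eq_of_length e1).symm.trans
      ((lcpL_prefix_right s t).eq_of_length e2)
  · rintro rfl; exact dL_self s

theorem dL_concat_pos {s t : List ℕ} {c : ℕ} (h : t ++ [c] <+: s) :
    dL s (t ++ [c]) + 1 = dL s t := by
  have ht : t <+: s := (List.prefix_append t [c]).trans h
  have hl := h.length_le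
  simp only [dL, lcpL_concat, if_pos h, lcpL_eq_of_prefix ht, List.length_append,
    List.length_singleton] at *
  omega

theorem dL_concat_neg {s t : List ℕ} {c : ℕ} (h : ¬ t ++ [c] <+: s) :
    dL s (t ++ [c]) = dL s t + 1 := by
  have h1 := (lcpL_prefix_left s t).length_le
  have h2 := (lcpL_prefix_right s t).length_le
  simp only [dL, lcpL_concat, if_neg h, List.length_append, List.length_singleton]
  omega

theorem dL_lipschitz1 (s t : List ℕ) (c : ℕ) : dL t s ≤ dL t (s ++ [c]) + 1 := by
  by_cases h : s ++ [c] <+: t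
  · have := dL_concat_pos h; omega
  · rw [dL_concat_neg h]; omega

theorem dL_lipschitz2 (s t : List ℕ) (c : ℕ) : dL t (s ++ [c]) ≤ dL t s + 1 := by
  by_cases h : s ++ [c] <+: t
  · have := dL_concat_pos h; omega
  · rw [dL_concat_neg h]


variable {d ℓ : ℕ}

def codeX : TreeBallX d ℓ → List ℕ
  | none => []
  | some (a, s) => (a : ℕ) :: s.1.map Fin.val

theorem codeX_injective : Function.Injective (codeX (d := d) (ℓ := ℓ)) := by
  rintro (_ | ⟨a, s⟩) (_ | ⟨b, t⟩) h
  · rfl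
  · simp [codeX] at h
  · simp [codeX] at h
  · simp only [codeX, List.cons.injEq] at h
    obtain ⟨h1, h2⟩ := h
    rw [Fin.val_injective h1,
      Subtype.ext (List.map_injective_iff.mpr Fin.val_injective h2 : s.1 = t.1)]

theorem codeX_length_le (hℓ : 1 ≤ ℓ) (x : TreeBallX d ℓ) : (codeX x).length ≤ ℓ := by
  rcases x with _ | ⟨a, s⟩
  · simp [codeX]
  · have := s.2; simp [codeX]; omega

theorem map_val_concat_iff {m : ℕ} {u v : List (Fin m)} {c : ℕ} :
    v.map Fin.val = u.map Fin.val ++ [c] ↔ ∃ bb : Fin m, (bb : ℕ) = c ∧ v = u ++ [bb] := by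
  constructor
  · intro h
    obtain ⟨l₁, l₂, rfl, h1, h2⟩ := List.map_eq_append_iff.mp h
    rcases l₂ with _ | ⟨bb, rest⟩
    · simp at h2
    · simp only [List.map_cons, List.cons.injEq] at h2
      obtain ⟨hbb, hrest⟩ := h2
      have : rest = [] := by simpa using congrArg List.length hrest
      subst this
      exact ⟨bb, hbb, by rw [List.map_injective_iff.mpr Fin.val_injective h1]⟩
  · rintro ⟨bb, rfl, rfl⟩; simp

theorem adjX_iff (x y : TreeBallX d ℓ) :
    (treeGraphX d ℓ).Adj x y ↔
      (∃ c, codeX y = codeX x ++ [c]) ∨ (∃ c, codeX x = codeX y ++ [c]) := by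
  have key : ∀ u v : TreeBallX d ℓ,
      ((∃ a : Fin d, u = none ∧ v = some (a, ⟨[], Nat.zero_le _⟩)) ∨
       (∃ (a : Fin d) (s t : TreeBallY (d - 1) (ℓ - 1)),
         u = some (a, s) ∧ v = some (a, t) ∧ ∃ b : Fin (d - 1), t.1 = s.1 ++ [b])) ↔
      (∃ c, codeX v = codeX u ++ [c]) := by
    intro u v
    constructor
    · rintro (⟨a, rfl, rfl⟩ | ⟨a, s, t, rfl, rfl, b, hb⟩)
      · exact ⟨a, rfl⟩
      · exact ⟨b, by simp [codeX, hb]⟩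
    · rintro ⟨c, hc⟩
      rcases v with _ | ⟨b, t⟩
      · simp [codeX] at hc
      rcases u with _ | ⟨a, s⟩
      · left
        simp only [codeX, List.nil_append, List.cons.injEq] at hc
        obtain ⟨hb, ht⟩ := hc
        have : t.1 = [] := by simpa using ht
        exact ⟨b, rfl, by rw [show t = ⟨[], Nat.zero_le _⟩ from Subtype.ext this]⟩
      · right
        simp only [codeX, List.cons_append, List.cons.injEq] at hc
        obtain ⟨hb, ht⟩ := hc
        obtain ⟨bb, _, hv⟩ := map_val_concat_iff.mp ht
        exact ⟨a, s, t, rfl, by rw [Fin.val_injective hb], bb, hv⟩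
  have hne : ∀ u v : TreeBallX d ℓ, (∃ c, codeX v = codeX u ++ [c]) → u ≠ v := by
    rintro u v ⟨c, hc⟩ rfl
    have := congrArg List.length hc
    simp at this
  rw [treeGraphX, SimpleGraph.fromRel_adj, key, key]
  constructor
  · rintro ⟨-, h⟩; exact h
  · rintro (h | h)
    · exact ⟨hne _ _ h, Or.inl h⟩
    · exact ⟨(hne _ _ h).symm, Or.inr h⟩

def parX : TreeBallX d ℓ → TreeBallX d ℓ
  | none => none
  | some (a, s) =>
    if h : s.1 = [] then none
    else some (a, ⟨s.1.dropLast, le_trans (by simp [List.length_dropLast]) s.2⟩)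

theorem codeX_parX (x : TreeBallX d ℓ) : codeX (parX x) = (codeX x).dropLast := by
  rcases x with _ | ⟨a, s⟩
  · rfl
  · by_cases h : s.1 = []
    · simp [parX, codeX, h]
    · have hm : s.1.map Fin.val ≠ [] := by simpa using h
      simp [parX, codeX, h, List.dropLast_cons_of_ne_nil hm, List.map_dropLast]

theorem adj_parX (x : TreeBallX d ℓ) (hx : codeX x ≠ []) :
    (treeGraphX d ℓ).Adj (parX x) x := by
  rw [adjX_iff]
  exact Or.inl ⟨(codeX x).getLast hx, by rw [codeX_parX, List.dropLast_append_getLast hx]⟩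

theorem exists_codeX_eq {p : List ℕ} {k : TreeBallX d ℓ} (h : p <+: codeX k) :
    ∃ v : TreeBallX d ℓ, codeX v = p := by
  rcases k with _ | ⟨b, t⟩
  · exact ⟨none, by simpa [codeX] using (List.prefix_nil.mp h).symm⟩
  · rcases p with _ | ⟨c, p⟩
    · exact ⟨none, rfl⟩
    · rw [show codeX (some (b, t)) = (b : ℕ) :: t.1.map Fin.val from rfl,
        List.cons_prefix_cons] at h
      obtain ⟨rfl, hp⟩ := h
      refine ⟨some (b, ⟨t.1.take p.length,
        by rw [List.length_take]; exact le_trans (min_le_right _ _) t.2⟩), ?_⟩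
      simp only [codeX, List.cons.injEq, true_and]
      rw [List.map_take, ← List.prefix_iff_eq_take.mp hp]

theorem prefix_dropLast {p l : List ℕ} (h : p <+: l) (hl : p.length < l.length) :
    p <+: l.dropLast := by
  rw [List.prefix_iff_eq_take] at h
  rw [List.prefix_iff_eq_take, List.dropLast_eq_take, List.take_take,
    min_eq_left (by omega)]
  exact h

theorem exists_walk_of_prefix : ∀ (n : ℕ) (x y : TreeBallX d ℓ),
    (codeX y).length ≤ n → codeX x <+: codeX y →
    ∃ p : (treeGraphX d ℓ).Walk y x, p.length + (codeX x).length = (codeX y).length := by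
  intro n
  induction n with
  | zero =>
    intro x y hn h
    have hxy : x = y := codeX_injective (h.eq_of_length (by have := h.length_le; omega))
    subst hxy
    exact ⟨SimpleGraph.Walk.nil, by simp⟩
  | succ n ih =>
    intro x y hn h
    by_cases heq : (codeX x).length = (codeX y).length
    · have hxy : x = y := codeX_injective (h.eq_of_length heq)
      subst hxy; exact ⟨SimpleGraph.Walk.nil, by simp⟩
    · have hlt : (codeX x).length < (codeX y).length := lt_of_le_of_ne h.length_le heq
      have hyne : codeX y ≠ [] := by
        intro h0; rw [h0] at hlt; simp at hlt
      have hlen : (codeX (parX y)).length + 1 = (codeX y).length := by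
        rw [codeX_parX, List.length_dropLast]; omega
      have hpre : codeX x <+: codeX (parX y) := by
        rw [codeX_parX]; exact prefix_dropLast h hlt
      obtain ⟨p, hp⟩ := ih x (parX y) (by omega) hpre
      exact ⟨SimpleGraph.Walk.cons (adj_parX y hyne).symm p,
        by rw [SimpleGraph.Walk.length_cons]; omega⟩

theorem dL_le_walk_length {x y : TreeBallX d ℓ} (p : (treeGraphX d ℓ).Walk x y) :
    dL (codeX x) (codeX y) ≤ p.length := by
  induction p with
  | nil => simp [dL_self]
  | @cons u v w huv q ih =>
    rw [SimpleGraph.Walk.length_cons]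
    rcases (adjX_iff u v).mp huv with ⟨c, hc⟩ | ⟨c, hc⟩
    · have h1 : dL (codeX u) (codeX w) ≤ dL (codeX v) (codeX w) + 1 := by
        rw [dL_comm (codeX u), dL_comm (codeX v), hc]
        exact dL_lipschitz1 _ _ _
      omega
    · have h1 : dL (codeX u) (codeX w) ≤ dL (codeX v) (codeX w) + 1 := by
        rw [dL_comm (codeX u), dL_comm (codeX v), hc]
        exact dL_lipschitz2 _ _ _
      omega

theorem distX_eq (x y : TreeBallX d ℓ) :
    (treeGraphX d ℓ).dist x y = dL (codeX x) (codeX y) := by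
  obtain ⟨v, hv⟩ := exists_codeX_eq (lcpL_prefix_right (codeX x) (codeX y))
  have hvx : codeX v <+: codeX x := hv ▸ lcpL_prefix_left _ _
  have hvy : codeX v <+: codeX y := hv ▸ lcpL_prefix_right _ _
  obtain ⟨px, hpx⟩ := exists_walk_of_prefix (codeX x).length v x le_rfl hvx
  obtain ⟨py, hpy⟩ := exists_walk_of_prefix (codeX y).length v y le_rfl hvy
  have hL1 := (lcpL_prefix_left (codeX x) (codeX y)).length_le
  have hL2 := (lcpL_prefix_right (codeX x) (codeX y)).length_le
  have hvlen : (codeX v).length = (lcpL (codeX x) (codeX y)).length := by rw [hv]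
  have hdl : dL (codeX x) (codeX y) = px.length + py.length := by
    rw [dL]; omega
  apply le_antisymm
  · calc (treeGraphX d ℓ).dist x y ≤ (px.append py.reverse).length :=
        SimpleGraph.dist_le _
      _ = dL (codeX x) (codeX y) := by
        rw [SimpleGraph.Walk.length_append, SimpleGraph.Walk.length_reverse, hdl]
  · obtain ⟨q, hq⟩ :=
      SimpleGraph.Reachable.exists_walk_length_eq_dist ⟨px.append py.reverse⟩
    rw [← hq]; exact dL_le_walk_length q

theorem distX_root (x : TreeBallX d ℓ) :
    (treeGraphX d ℓ).dist (rootX d ℓ) x = (codeX x).length := by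
  rw [distX_eq, show codeX (rootX d ℓ) = [] from rfl, dL_nil_left]

theorem adj_none_some {a : Fin d} {s : TreeBallY (d - 1) (ℓ - 1)} :
    (treeGraphX d ℓ).Adj none (some (a, s)) ↔ s.1 = [] := by
  refine (adjX_iff _ _).trans ?_
  constructor
  · rintro (⟨c, hc⟩ | ⟨c, hc⟩)
    · simp only [codeX, List.nil_append, List.cons.injEq] at hc
      simpa using hc.2
    · simp [codeX] at hc
  · intro h
    exact Or.inl ⟨a, by simp [codeX, h]⟩

theorem adj_some_some {a₀ b : Fin d} {s₀ t : TreeBallY (d - 1) (ℓ - 1)} :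
    (treeGraphX d ℓ).Adj (some (a₀, s₀)) (some (b, t)) ↔
      b = a₀ ∧ ((∃ bb : Fin (d - 1), t.1 = s₀.1 ++ [bb]) ∨
        (∃ bb : Fin (d - 1), s₀.1 = t.1 ++ [bb])) := by
  refine (adjX_iff _ _).trans ?_
  constructor
  · rintro (⟨c, hc⟩ | ⟨c, hc⟩)
    · simp only [codeX, List.cons_append, List.cons.injEq] at hc
      obtain ⟨bb, _, hv⟩ := map_val_concat_iff.mp hc.2
      exact ⟨Fin.val_injective hc.1, Or.inl ⟨bb, hv⟩⟩
    · simp only [codeX, List.cons_append, List.cons.injEq] at hc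
      obtain ⟨bb, _, hv⟩ := map_val_concat_iff.mp hc.2
      exact ⟨(Fin.val_injective hc.1).symm, Or.inr ⟨bb, hv⟩⟩
  · rintro ⟨rfl, (⟨bb, hbb⟩ | ⟨bb, hbb⟩)⟩
    · exact Or.inl ⟨bb, by simp [codeX, hbb]⟩
    · exact Or.inr ⟨bb, by simp [codeX, hbb]⟩

theorem dL_concat_left_pos {u v : List ℕ} {c : ℕ} (h : u ++ [c] <+: v) :
    dL (u ++ [c]) v + 1 = dL u v := by
  rw [dL_comm, dL_comm u]; exact dL_concat_pos h

theorem dL_concat_left_neg {u v : List ℕ} {c : ℕ} (h : ¬ u ++ [c] <+: v) :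
    dL (u ++ [c]) v = dL u v + 1 := by
  rw [dL_comm, dL_comm u]; exact dL_concat_neg h

theorem sum_ite_unique {n : ℕ} {P : Fin n → Prop} [DecidablePred P] (b₀ : Fin n)
    (h : ∀ b, P b ↔ b = b₀) (X Y : ℂ) :
    ∑ b : Fin n, (if P b then X else Y) = X + ((n : ℂ) - 1) * Y := by
  have h1 : ∀ b : Fin n, (if P b then X else Y) = if b = b₀ then X else Y := fun b => by
    by_cases hb : P b
    · rw [if_pos hb, if_pos ((h b).mp hb)]
    · rw [if_neg hb, if_neg (fun e => hb ((h b).mpr e))]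
  rw [Finset.sum_congr rfl fun b _ => h1 b,
    ← Finset.add_sum_erase _ _ (Finset.mem_univ b₀), if_pos rfl]
  congr 1
  rw [Finset.sum_congr rfl (fun b hb => if_neg (Finset.ne_of_mem_erase hb)),
    Finset.sum_const, Finset.card_erase_of_mem (Finset.mem_univ b₀), Finset.card_univ,
    Fintype.card_fin, nsmul_eq_mul, Nat.cast_sub b₀.pos, Nat.cast_one]

open scoped Classical in
theorem sum_adj (hd : 3 ≤ d) (hℓ : 1 ≤ ℓ) (w : ℂ) (k i : TreeBallX d ℓ) :
    (∑ j : TreeBallX d ℓ, if (treeGraphX d ℓ).Adj i j then w ^ dL (codeX j) (codeX k) else 0) =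
      if i = k then (if (codeX i).length = ℓ then 1 else (d : ℂ)) * w
      else w ^ (dL (codeX i) (codeX k) - 1) +
        (if (codeX i).length = ℓ then 0
         else ((d : ℂ) - 1) * w ^ (dL (codeX i) (codeX k) + 1)) := by
  have hsum0 : (∑ j : TreeBallX d ℓ, if (treeGraphX d ℓ).Adj i j then
      w ^ dL (codeX j) (codeX k) else 0) =
      (if (treeGraphX d ℓ).Adj i none then w ^ dL (codeX (none : TreeBallX d ℓ)) (codeX k) else 0)
      + ∑ b : Fin d, ∑ t : TreeBallY (d - 1) (ℓ - 1),
        (if (treeGraphX d ℓ).Adj i (some (b, t)) then w ^ dL (codeX (some (b, t))) (codeX k)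
         else 0) := by
    rw [show (∑ j : TreeBallX d ℓ, if (treeGraphX d ℓ).Adj i j then
        w ^ dL (codeX j) (codeX k) else 0) =
        ∑ j : Option (Fin d × TreeBallY (d - 1) (ℓ - 1)),
          (if (treeGraphX d ℓ).Adj i j then w ^ dL (codeX j) (codeX k) else 0) from rfl,
      Fintype.sum_option, Fintype.sum_prod_type]
  rw [hsum0]
  rcases i with _ | ⟨a₀, s₀⟩
  · -- i is the root
    rw [if_neg (show ¬ (treeGraphX d ℓ).Adj (none : TreeBallX d ℓ) none from (treeGraphX d ℓ).irrefl)]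
    have hcol : ∀ b : Fin d, (∑ t : TreeBallY (d - 1) (ℓ - 1),
        (if (treeGraphX d ℓ).Adj none (some (b, t)) then w ^ dL (codeX (some (b, t))) (codeX k)
         else 0)) = w ^ dL [(b : ℕ)] (codeX k) := by
      intro b
      have h1 : ∀ t : TreeBallY (d - 1) (ℓ - 1),
          (if (treeGraphX d ℓ).Adj none (some (b, t)) then
            w ^ dL (codeX (some (b, t))) (codeX k) else 0) =
          (if t = (⟨[], Nat.zero_le _⟩ : TreeBallY (d - 1) (ℓ - 1)) then
            w ^ dL (codeX (some (b, t))) (codeX k) else 0) := by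
        intro t
        congr 1
        rw [adj_none_some]
        exact propext ⟨fun h => Subtype.ext h, fun h => by rw [h]⟩
      erw [Finset.sum_congr rfl fun t _ => h1 t]
      refine (Finset.sum_eq_single_of_mem (⟨[], Nat.zero_le _⟩ : TreeBallY (d - 1) (ℓ - 1))
        (Finset.mem_univ (α := TreeBallY (d - 1) (ℓ - 1)) _) ?_).trans ?_
      · intro t _ ht; exact if_neg ht
      exact if_pos rfl
    rw [Finset.sum_congr rfl fun b _ => hcol b, zero_add]
    rcases k with _ | ⟨b, t⟩
    · -- k is also the root
      erw [if_pos (rfl : (none : TreeBallX d ℓ) = none), if_neg (show ¬ (codeX (none : TreeBallX d ℓ)).length = ℓ by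
        rw [show codeX (none : TreeBallX d ℓ) = [] from rfl]; simp; omega)]
      have : ∀ b : Fin d, dL [(b : ℕ)] (codeX (none : TreeBallX d ℓ)) = 1 := fun b => by
        rw [show codeX (none : TreeBallX d ℓ) = [] from rfl, dL_comm, dL_nil_left]; rfl
      rw [Finset.sum_congr rfl fun b _ => by rw [this b]]
      simp [Finset.card_univ, mul_comm]
    · -- k = some (b, t)
      erw [if_neg (by simp : ¬ (none : TreeBallX d ℓ) = some (b, t)),
        if_neg (show ¬ (codeX (none : TreeBallX d ℓ)).length = ℓ by
          rw [show codeX (none : TreeBallX d ℓ) = [] from rfl]; simp; omega)]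
      set tl := t.1.map Fin.val with htl
      have hck : codeX (some (b, t) : TreeBallX d ℓ) = (b : ℕ) :: tl := rfl
      have hexp : ∀ a : Fin d, dL [(a : ℕ)] (codeX (some (b, t) : TreeBallX d ℓ)) =
          if a = b then tl.length else tl.length + 2 := by
        intro a
        by_cases hab : a = b
        · subst hab
          rw [if_pos rfl, hck]
          simp [dL, lcpL, lcpL_nil_left]; omega
        · rw [if_neg hab, hck]
          have : ¬ (a : ℕ) = (b : ℕ) := fun h => hab (Fin.val_injective h)
          simp [dL, lcpL, this]; omega
      have h2 : ∀ a : Fin d, w ^ dL [(a : ℕ)] (codeX (some (b, t) : TreeBallX d ℓ)) =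
          if a = b then w ^ tl.length else w ^ (tl.length + 2) := by
        intro a
        rw [hexp a]
        by_cases hab : a = b <;> simp [hab]
      rw [Finset.sum_congr rfl fun a _ => h2 a, sum_ite_unique b (fun a => Iff.rfl) _ _]
      have e1 : dL (codeX (none : TreeBallX d ℓ)) (codeX (some (b, t) : TreeBallX d ℓ)) =
          tl.length + 1 := by
        rw [show codeX (none : TreeBallX d ℓ) = [] from rfl, dL_nil_left, hck]; rfl
      rw [e1]
      norm_num
  · -- i = some (a₀, s₀)
    have hAn : (treeGraphX d ℓ).Adj (some (a₀, s₀)) none ↔ s₀.1 = [] := by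
      exact ((treeGraphX d ℓ).adj_comm _ _).trans adj_none_some
    have hsummand : ∀ (b : Fin d) (t : TreeBallY (d - 1) (ℓ - 1)),
        (if (treeGraphX d ℓ).Adj (some (a₀, s₀)) (some (b, t)) then
          w ^ dL (codeX (some (b, t))) (codeX k) else 0) =
        if b = a₀ then
          ((if (∃ bb : Fin (d - 1), t.1 = s₀.1 ++ [bb]) then
              w ^ dL (codeX (some (b, t))) (codeX k) else 0)
            + (if (∃ bb : Fin (d - 1), s₀.1 = t.1 ++ [bb]) then
              w ^ dL (codeX (some (b, t))) (codeX k) else 0))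
        else 0 := by
      intro b t
      by_cases hb : b = a₀
      · rw [if_pos hb]
        by_cases hC : (∃ bb : Fin (d - 1), t.1 = s₀.1 ++ [bb]) <;>
          by_cases hP : (∃ bb : Fin (d - 1), s₀.1 = t.1 ++ [bb])
        · exfalso
          obtain ⟨bb, hbb⟩ := hC; obtain ⟨cc, hcc⟩ := hP
          have h1 := congrArg List.length hbb
          have h2 := congrArg List.length hcc
          simp only [List.length_append, List.length_singleton] at h1 h2
          omega
        · rw [if_pos hC, if_neg hP, add_zero, if_pos (adj_some_some.mpr ⟨hb, Or.inl hC⟩)]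
        · rw [if_neg hC, if_pos hP, zero_add, if_pos (adj_some_some.mpr ⟨hb, Or.inr hP⟩)]
        · rw [if_neg hC, if_neg hP, add_zero, if_neg (fun h => by
            rcases (adj_some_some.mp h).2 with h' | h'
            · exact hC h'
            · exact hP h')]
      · rw [if_neg hb, if_neg (fun h => hb (adj_some_some.mp h).1)]
    have hpull : ∀ b : Fin d, (∑ t : TreeBallY (d - 1) (ℓ - 1),
        (if b = a₀ then
          ((if (∃ bb : Fin (d - 1), t.1 = s₀.1 ++ [bb]) then
              w ^ dL (codeX (some (b, t))) (codeX k) else 0)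
            + (if (∃ bb : Fin (d - 1), s₀.1 = t.1 ++ [bb]) then
              w ^ dL (codeX (some (b, t))) (codeX k) else 0))
        else 0)) =
        if b = a₀ then
          ((∑ t : TreeBallY (d - 1) (ℓ - 1),
            (if (∃ bb : Fin (d - 1), t.1 = s₀.1 ++ [bb]) then
              w ^ dL (codeX (some (b, t))) (codeX k) else 0))
          + (∑ t : TreeBallY (d - 1) (ℓ - 1),
            (if (∃ bb : Fin (d - 1), s₀.1 = t.1 ++ [bb]) then
              w ^ dL (codeX (some (b, t))) (codeX k) else 0)))
        else 0 := by
      intro b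
      by_cases hb : b = a₀
      · rw [if_pos hb, ← Finset.sum_add_distrib]
        exact Finset.sum_congr rfl fun t _ => if_pos hb
      · rw [if_neg hb]
        exact Finset.sum_eq_zero fun t _ => if_neg hb
    rw [Finset.sum_congr rfl fun b _ => (Finset.sum_congr rfl fun t _ => hsummand b t).trans
      (hpull b), Finset.sum_ite_eq' _ _ _, if_pos (Finset.mem_univ _)]
    have hfirst : (if (treeGraphX d ℓ).Adj (some (a₀, s₀)) none then
        w ^ dL (codeX (none : TreeBallX d ℓ)) (codeX k) else 0)
        = if s₀.1 = [] then
            w ^ dL ((codeX (some (a₀, s₀) : TreeBallX d ℓ)).dropLast) (codeX k) else 0 := by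
      by_cases h0 : s₀.1 = []
      · rw [if_pos (hAn.mpr h0), if_pos h0]
        congr 2
        rw [show codeX (none : TreeBallX d ℓ) = [] from rfl]
        simp [codeX, h0]
      · rw [if_neg (fun h => h0 (hAn.mp h)), if_neg h0]
    have hBsum : (∑ t : TreeBallY (d - 1) (ℓ - 1),
        (if (∃ bb : Fin (d - 1), s₀.1 = t.1 ++ [bb]) then
          w ^ dL (codeX (some (a₀, t))) (codeX k) else 0))
        = if s₀.1 = [] then 0
          else w ^ dL ((codeX (some (a₀, s₀) : TreeBallX d ℓ)).dropLast) (codeX k) := by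
      by_cases h0 : s₀.1 = []
      · rw [if_pos h0]
        refine Finset.sum_eq_zero fun t _ => if_neg ?_
        rintro ⟨bb, hbb⟩
        rw [h0] at hbb; simp at hbb
      · rw [if_neg h0]
        have hptlen : s₀.1.dropLast.length ≤ ℓ - 1 :=
          le_trans (by simp [List.length_dropLast]) s₀.2
        have hcond : ∀ t : TreeBallY (d - 1) (ℓ - 1),
            (∃ bb : Fin (d - 1), s₀.1 = t.1 ++ [bb]) ↔
            t = (⟨s₀.1.dropLast, hptlen⟩ : TreeBallY (d - 1) (ℓ - 1)) := by
          intro t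
          constructor
          · rintro ⟨bb, hbb⟩
            apply Subtype.ext
            show t.1 = s₀.1.dropLast
            rw [hbb, List.dropLast_concat]
          · rintro rfl
            exact ⟨s₀.1.getLast h0, (List.dropLast_append_getLast h0).symm⟩
        have h1 : ∀ t : TreeBallY (d - 1) (ℓ - 1),
            (if (∃ bb : Fin (d - 1), s₀.1 = t.1 ++ [bb]) then
              w ^ dL (codeX (some (a₀, t))) (codeX k) else 0) =
            (if t = (⟨s₀.1.dropLast, hptlen⟩ : TreeBallY (d - 1) (ℓ - 1)) then
              w ^ dL (codeX (some (a₀, t))) (codeX k) else 0) := fun t => by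
          congr 1
          exact propext (hcond t)
        erw [Finset.sum_congr rfl fun t _ => h1 t]
        refine (Finset.sum_eq_single_of_mem (⟨s₀.1.dropLast, hptlen⟩ : TreeBallY (d - 1) (ℓ - 1))
          (Finset.mem_univ (α := TreeBallY (d - 1) (ℓ - 1)) _) ?_).trans ?_
        · intro t _ ht; exact if_neg ht
        refine (if_pos rfl).trans ?_
        congr 2
        have hm : s₀.1.map Fin.val ≠ [] := by simpa using h0
        show ((a₀ : ℕ) :: (s₀.1.dropLast).map Fin.val) = _
        rw [show codeX (some (a₀, s₀) : TreeBallX d ℓ) = (a₀ : ℕ) :: s₀.1.map Fin.val from rfl,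
          List.dropLast_cons_of_ne_nil hm, List.map_dropLast]
    have hAsum : (∑ t : TreeBallY (d - 1) (ℓ - 1),
        (if (∃ bb : Fin (d - 1), t.1 = s₀.1 ++ [bb]) then
          w ^ dL (codeX (some (a₀, t))) (codeX k) else 0))
        = if s₀.1.length = ℓ - 1 then 0
          else ∑ bb : Fin (d - 1),
            w ^ dL (codeX (some (a₀, s₀) : TreeBallX d ℓ) ++ [(bb : ℕ)]) (codeX k) := by
      by_cases hlf : s₀.1.length = ℓ - 1
      · rw [if_pos hlf]
        refine Finset.sum_eq_zero fun t _ => if_neg ?_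
        rintro ⟨bb, hbb⟩
        have h1 := t.2
        have h2 := congrArg List.length hbb
        simp only [List.length_append, List.length_singleton] at h2
        omega
      · rw [if_neg hlf]
        have hlt : s₀.1.length < ℓ - 1 := lt_of_le_of_ne s₀.2 hlf
        have hch : ∀ bb : Fin (d - 1), (s₀.1 ++ [bb]).length ≤ ℓ - 1 := by
          intro bb; simp only [List.length_append, List.length_singleton]; omega
        set ch : Fin (d - 1) → TreeBallY (d - 1) (ℓ - 1) :=
          fun bb => ⟨s₀.1 ++ [bb], hch bb⟩ with hchdef
        have hinj : ∀ x ∈ Finset.univ, ∀ y ∈ Finset.univ, ch x = ch y → x = y := by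
          intro x _ y _ h
          have h2 : s₀.1 ++ [x] = s₀.1 ++ [y] := congrArg Subtype.val h
          simpa using h2
        have hfil : Finset.filter
            (fun t : TreeBallY (d - 1) (ℓ - 1) => ∃ bb : Fin (d - 1), t.1 = s₀.1 ++ [bb])
            Finset.univ = Finset.image ch Finset.univ := by
          ext t
          simp only [Finset.mem_filter, Finset.mem_univ, true_and, Finset.mem_image]
          constructor
          · rintro ⟨bb, hbb⟩
            exact ⟨bb, Subtype.ext hbb.symm⟩
          · rintro ⟨bb, _, rfl⟩
            exact ⟨bb, rfl⟩
        rw [← Finset.sum_filter, hfil, Finset.sum_image hinj]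
        refine Finset.sum_congr rfl fun bb _ => ?_
        congr 2
        show ((a₀ : ℕ) :: (s₀.1 ++ [bb]).map Fin.val) = _
        simp [codeX]
    rw [hfirst, hAsum, hBsum]
    have hcomb : ∀ X Y : ℂ, (if s₀.1 = [] then X else 0) + (Y + (if s₀.1 = [] then 0 else X))
        = X + Y := by
      intro X Y
      by_cases h0 : s₀.1 = [] <;> simp [h0] <;> ring
    rw [hcomb]
    have hci_ne : codeX (some (a₀, s₀) : TreeBallX d ℓ) ≠ [] := by
      show (a₀ : ℕ) :: s₀.1.map Fin.val ≠ []
      simp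
    have hcilen : (codeX (some (a₀, s₀) : TreeBallX d ℓ)).length = s₀.1.length + 1 := by
      show ((a₀ : ℕ) :: s₀.1.map Fin.val).length = _
      simp
    have hlfiff : ((codeX (some (a₀, s₀) : TreeBallX d ℓ)).length = ℓ) ↔
        s₀.1.length = ℓ - 1 := by omega
    have hsplit : (codeX (some (a₀, s₀) : TreeBallX d ℓ)).dropLast ++
        [(codeX (some (a₀, s₀) : TreeBallX d ℓ)).getLast hci_ne] =
        codeX (some (a₀, s₀) : TreeBallX d ℓ) := List.dropLast_append_getLast hci_ne
    have hcast : ((d - 1 : ℕ) : ℂ) = (d : ℂ) - 1 := by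
      rw [Nat.cast_sub (by omega)]; simp
    by_cases hik : (some (a₀, s₀) : TreeBallX d ℓ) = k
    · subst hik
      erw [if_pos (rfl : (some (a₀, s₀) : TreeBallX d ℓ) = some (a₀, s₀))]
      have hpar1 : dL ((codeX (some (a₀, s₀) : TreeBallX d ℓ)).dropLast)
          (codeX (some (a₀, s₀) : TreeBallX d ℓ)) = 1 := by
        have h1 := dL_concat_left_pos (u := (codeX (some (a₀, s₀) : TreeBallX d ℓ)).dropLast)
          (c := (codeX (some (a₀, s₀) : TreeBallX d ℓ)).getLast hci_ne)
          (v := codeX (some (a₀, s₀) : TreeBallX d ℓ)) (by rw [hsplit])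
        rw [hsplit, dL_self] at h1
        omega
      have hch1 : ∀ bb : Fin (d - 1),
          w ^ dL (codeX (some (a₀, s₀) : TreeBallX d ℓ) ++ [(bb : ℕ)])
            (codeX (some (a₀, s₀) : TreeBallX d ℓ)) = w := by
        intro bb
        have h2 : ¬ (codeX (some (a₀, s₀) : TreeBallX d ℓ) ++ [(bb : ℕ)] <+:
            codeX (some (a₀, s₀) : TreeBallX d ℓ)) := by
          intro h
          have := h.length_le
          simp at this
        rw [dL_concat_left_neg h2, dL_self, zero_add, pow_one]
      rw [hpar1, pow_one]
      by_cases hlf : s₀.1.length = ℓ - 1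
      · rw [if_pos hlf, if_pos (hlfiff.mpr hlf), add_zero, one_mul]
      · rw [if_neg hlf, if_neg (fun h => hlf (hlfiff.mp h)),
          Finset.sum_congr rfl fun bb _ => hch1 bb, Finset.sum_const, Finset.card_univ,
          Fintype.card_fin, nsmul_eq_mul, hcast]
        ring
    · erw [if_neg hik]
      have hnecode : codeX (some (a₀, s₀) : TreeBallX d ℓ) ≠ codeX k :=
        fun h => hik (codeX_injective h)
      have he0 : dL (codeX (some (a₀, s₀) : TreeBallX d ℓ)) (codeX k) ≠ 0 :=
        fun h => hnecode (dL_eq_zero_iff.mp h)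
      by_cases hpre : codeX (some (a₀, s₀) : TreeBallX d ℓ) <+: codeX k
      · obtain ⟨r, hr⟩ := hpre
        rcases r with _ | ⟨zz, rest⟩
        · exact absurd (by rw [← hr]; simp) hnecode
        · rcases k with _ | ⟨b, t⟩
          · exfalso
            rw [show codeX (none : TreeBallX d ℓ) = [] from rfl] at hr
            simp at hr
          · have hpre' : codeX (some (a₀, s₀) : TreeBallX d ℓ) <+: codeX (some (b, t)) :=
              ⟨zz :: rest, hr⟩
            have hzmem : zz ∈ t.1.map Fin.val := by
              rw [show codeX (some (b, t) : TreeBallX d ℓ) = (b : ℕ) :: t.1.map Fin.val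
                from rfl, show codeX (some (a₀, s₀) : TreeBallX d ℓ) =
                (a₀ : ℕ) :: s₀.1.map Fin.val from rfl] at hr
              rw [List.cons_append] at hr
              have h2 : s₀.1.map Fin.val ++ zz :: rest = t.1.map Fin.val :=
                (List.cons.injEq _ _ _ _ ▸ hr).2
              rw [← h2]
              simp
            obtain ⟨bb₀, _, hbb₀⟩ := List.mem_map.mp hzmem
            have hppos : codeX (some (a₀, s₀) : TreeBallX d ℓ) ++ [zz] <+:
                codeX (some (b, t)) := ⟨rest, by rw [← hr]; simp⟩
            have hno : ∀ bb : Fin (d - 1),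
                (codeX (some (a₀, s₀) : TreeBallX d ℓ) ++ [(bb : ℕ)] <+:
                  codeX (some (b, t))) ↔ bb = bb₀ := by
              intro bb
              constructor
              · intro h
                rw [← hr] at h
                have h2 : [(bb : ℕ)] <+: zz :: rest :=
                  (List.prefix_append_right_inj _).mp h
                rw [List.cons_prefix_cons] at h2
                exact Fin.val_injective (h2.1.trans hbb₀.symm)
              · rintro rfl
                rw [hbb₀]
                exact hppos
            have hd1 : dL (codeX (some (a₀, s₀) : TreeBallX d ℓ) ++ [zz])
                (codeX (some (b, t))) + 1 =
                dL (codeX (some (a₀, s₀) : TreeBallX d ℓ)) (codeX (some (b, t))) :=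
              dL_concat_left_pos hppos
            have hE : ∀ bb : Fin (d - 1),
                w ^ dL (codeX (some (a₀, s₀) : TreeBallX d ℓ) ++ [(bb : ℕ)])
                  (codeX (some (b, t))) =
                if bb = bb₀ then
                  w ^ (dL (codeX (some (a₀, s₀) : TreeBallX d ℓ)) (codeX (some (b, t))) - 1)
                else
                  w ^ (dL (codeX (some (a₀, s₀) : TreeBallX d ℓ)) (codeX (some (b, t))) + 1)
                := by
              intro bb
              by_cases hb : bb = bb₀
              · rw [if_pos hb, hb, hbb₀]
                congr 1
                omega
              · rw [if_neg hb]
                congr 1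
                exact dL_concat_left_neg (fun h => hb ((hno bb).mp h))
            have hck_le := codeX_length_le hℓ (some (b, t) : TreeBallX d ℓ)
            have hlt : (codeX (some (a₀, s₀) : TreeBallX d ℓ)).length <
                (codeX (some (b, t) : TreeBallX d ℓ)).length := by
              rw [← hr]
              simp
            have hnl : ¬ s₀.1.length = ℓ - 1 := by omega
            rw [if_neg hnl, Finset.sum_congr rfl fun bb _ => hE bb,
              sum_ite_unique bb₀ (fun _ => Iff.rfl) _ _]
            have hpp : dL ((codeX (some (a₀, s₀) : TreeBallX d ℓ)).dropLast)
                (codeX (some (b, t))) =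
                dL (codeX (some (a₀, s₀) : TreeBallX d ℓ)) (codeX (some (b, t))) + 1 := by
              have h2 := dL_concat_left_pos
                (u := (codeX (some (a₀, s₀) : TreeBallX d ℓ)).dropLast)
                (c := (codeX (some (a₀, s₀) : TreeBallX d ℓ)).getLast hci_ne)
                (v := codeX (some (b, t))) (by rw [hsplit]; exact hpre')
              rw [hsplit] at h2
              omega
            rw [hpp, if_neg (fun h => hnl (hlfiff.mp h)), hcast]
            ring
      · have hpp : dL ((codeX (some (a₀, s₀) : TreeBallX d ℓ)).dropLast) (codeX k) + 1 =
            dL (codeX (some (a₀, s₀) : TreeBallX d ℓ)) (codeX k) := by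
          have h2 := dL_concat_left_neg
            (u := (codeX (some (a₀, s₀) : TreeBallX d ℓ)).dropLast)
            (c := (codeX (some (a₀, s₀) : TreeBallX d ℓ)).getLast hci_ne)
            (v := codeX k) (by rw [hsplit]; exact hpre)
          rw [hsplit] at h2
          omega
        have hppE : w ^ dL ((codeX (some (a₀, s₀) : TreeBallX d ℓ)).dropLast) (codeX k) =
            w ^ (dL (codeX (some (a₀, s₀) : TreeBallX d ℓ)) (codeX k) - 1) := by
          congr 1
          omega
        have hE : ∀ bb : Fin (d - 1),
            w ^ dL (codeX (some (a₀, s₀) : TreeBallX d ℓ) ++ [(bb : ℕ)]) (codeX k) =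
            w ^ (dL (codeX (some (a₀, s₀) : TreeBallX d ℓ)) (codeX k) + 1) := by
          intro bb
          congr 1
          exact dL_concat_left_neg
            (fun h => hpre ((List.prefix_append _ [(bb : ℕ)]).trans h))
        rw [hppE]
        by_cases hlf : s₀.1.length = ℓ - 1
        · rw [if_pos hlf, if_pos (hlfiff.mpr hlf)]
        · rw [if_neg hlf, if_neg (fun h => hlf (hlfiff.mp h)),
            Finset.sum_congr rfl fun bb _ => hE bb, Finset.sum_const, Finset.card_univ,
            Fintype.card_fin, nsmul_eq_mul, hcast]

end GreenAux

open GreenAux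

/-- **Green's function of the `d`-regular tree ball.** Fix `d ≥ 3`, `ℓ ≥ 1`, and `z ∈ ℂ` with
`Im z > 0`; let `m_sc(z)` be the unique root of `m² + z m + 1 = 0` with positive imaginary part
and `m_d(z) = 1/(-z - (d/(d-1)) m_sc(z))`. Then `H_{𝒳_ℓ} - z·I - m_sc(z)·𝕀∂` is invertible and
its inverse `P` satisfies `P_{ij} = m_d(z) · (-m_sc(z)/√(d-1))^{dist(i,j)}`. -/
theorem green_function_regular_tree_ball (d ℓ : ℕ) (hd : 3 ≤ d) (hℓ : 1 ≤ ℓ)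
    (z msc : ℂ) (hz : 0 < z.im)
    (hmsc : msc ^ 2 + z * msc + 1 = 0) (him : 0 < msc.im) :
    IsUnit (HmatX d ℓ - z • (1 : Matrix (TreeBallX d ℓ) (TreeBallX d ℓ) ℂ) - msc • IbdX d ℓ) ∧
    ∀ i j : TreeBallX d ℓ,
      ((HmatX d ℓ - z • 1 - msc • IbdX d ℓ)⁻¹) i j =
        (-z - ((d : ℂ) / ((d : ℂ) - 1)) * msc)⁻¹ *
          (-(msc / (Real.sqrt ((d : ℝ) - 1) : ℂ))) ^ ((treeGraphX d ℓ).dist i j) := by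
  classical
  set sq : ℂ := ((Real.sqrt ((d : ℝ) - 1) : ℝ) : ℂ) with hsqdef
  have hd1R : (0 : ℝ) < (d : ℝ) - 1 := by
    have h3 : (3 : ℝ) ≤ (d : ℝ) := by exact_mod_cast hd
    linarith
  have hsqR : (0 : ℝ) < Real.sqrt ((d : ℝ) - 1) := Real.sqrt_pos.mpr hd1R
  have hsq0 : sq ≠ 0 := by
    rw [hsqdef]
    exact_mod_cast hsqR.ne'
  have hsq2 : sq ^ 2 = (d : ℂ) - 1 := by
    rw [hsqdef, ← Complex.ofReal_pow, Real.sq_sqrt hd1R.le]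
    push_cast
    ring
  have hq0 : (d : ℂ) - 1 ≠ 0 := by
    rw [← hsq2]
    exact pow_ne_zero _ hsq0
  set w : ℂ := -(msc / sq) with hwdef
  set X : ℂ := -z - (d : ℂ) / ((d : ℂ) - 1) * msc with hXdef
  have hX0 : X ≠ 0 := by
    have hrr : (d : ℂ) / ((d : ℂ) - 1) = (((d : ℝ) / ((d : ℝ) - 1) : ℝ) : ℂ) := by
      push_cast
      ring
    have hrpos : (0 : ℝ) < (d : ℝ) / ((d : ℝ) - 1) := by
      apply div_pos _ hd1R
      linarith
    have him' : X.im < 0 := by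
      rw [hXdef, hrr]
      have h1 : ((((d : ℝ) / ((d : ℝ) - 1) : ℝ) : ℂ) * msc).im =
          ((d : ℝ) / ((d : ℝ) - 1)) * msc.im := by
        rw [Complex.mul_im, Complex.ofReal_re, Complex.ofReal_im]
        ring
      rw [Complex.sub_im, Complex.neg_im, h1]
      nlinarith [mul_pos hrpos him]
    intro h
    rw [h] at him'
    simp at him'
  have hcX : X * X⁻¹ = 1 := mul_inv_cancel₀ hX0
  set P : Matrix (TreeBallX d ℓ) (TreeBallX d ℓ) ℂ :=
    fun i j => X⁻¹ * w ^ ((treeGraphX d ℓ).dist i j) with hPdef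
  have hMP : (HmatX d ℓ - z • (1 : Matrix (TreeBallX d ℓ) (TreeBallX d ℓ) ℂ)
      - msc • IbdX d ℓ) * P = 1 := by
    ext i k
    rw [Matrix.mul_apply, Matrix.one_apply]
    have expand : ∀ j, (HmatX d ℓ - z • (1 : Matrix (TreeBallX d ℓ) (TreeBallX d ℓ) ℂ)
        - msc • IbdX d ℓ) i j * P j k =
        sq⁻¹ * X⁻¹ * (if (treeGraphX d ℓ).Adj i j then w ^ dL (codeX j) (codeX k) else 0)
        - (if i = j then z * (X⁻¹ * w ^ dL (codeX i) (codeX k)) else 0)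
        - (if i = j then
            msc * ((if (codeX i).length = ℓ then (1 : ℂ) else 0) *
              (X⁻¹ * w ^ dL (codeX i) (codeX k))) else 0) := by
      intro j
      have hP : P j k = X⁻¹ * w ^ dL (codeX j) (codeX k) := by
        rw [hPdef]
        simp only
        rw [distX_eq]
      simp only [Matrix.sub_apply, Matrix.smul_apply, Matrix.one_apply, HmatX, IbdX,
        Matrix.diagonal_apply, smul_eq_mul, hP]
      rw [← hsqdef, distX_root]
      by_cases hij : i = j
      · subst hij
        simp only [if_pos rfl]
        by_cases hadj : (treeGraphX d ℓ).Adj i i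
        · exact absurd hadj ((treeGraphX d ℓ).irrefl)
        · rw [if_neg hadj, if_neg hadj]
          by_cases hlf : (codeX i).length = ℓ <;> simp [hlf] <;> ring
      · simp only [if_neg hij, if_neg (fun h => hij h)]
        by_cases hadj : (treeGraphX d ℓ).Adj i j
        · rw [if_pos hadj, if_pos hadj]
          ring
        · rw [if_neg hadj, if_neg hadj]
          ring
    rw [Finset.sum_congr rfl fun j _ => expand j]
    rw [Finset.sum_sub_distrib, Finset.sum_sub_distrib, ← Finset.mul_sum,
      Finset.sum_ite_eq _ i _, Finset.sum_ite_eq _ i _, if_pos (Finset.mem_univ i),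
      if_pos (Finset.mem_univ i), sum_adj hd hℓ w k i]
    by_cases hik : i = k
    · subst hik
      rw [if_pos rfl, if_pos rfl, dL_self, pow_zero]
      by_cases hlf : (codeX i).length = ℓ
      · rw [if_pos hlf, if_pos hlf]
        have E2 : sq⁻¹ * w - z - msc = X := by
          have h1 : sq⁻¹ * w - z - msc = -msc * (sq⁻¹ ^ 2) - z - msc := by
            rw [hwdef]; ring
          rw [h1, inv_pow, hsq2, hXdef]
          field_simp
          ring
        linear_combination X⁻¹ * E2 + hcX
      · rw [if_neg hlf, if_neg hlf]
        have E1 : sq⁻¹ * ((d : ℂ) * w) - z = X := by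
          have h1 : sq⁻¹ * ((d : ℂ) * w) - z = -(d : ℂ) * msc * (sq⁻¹ ^ 2) - z := by
            rw [hwdef]; ring
          rw [h1, inv_pow, hsq2, hXdef]
          field_simp
          ring
        linear_combination X⁻¹ * E1 + hcX
    · rw [if_neg hik, if_neg hik]
      have he0 : dL (codeX i) (codeX k) ≠ 0 :=
        fun h => hik (codeX_injective (dL_eq_zero_iff.mp h))
      rw [show dL (codeX i) (codeX k) = (dL (codeX i) (codeX k) - 1) + 1 from by omega,
        Nat.add_sub_cancel]
      set n := dL (codeX i) (codeX k) - 1 with hndef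
      by_cases hlf : (codeX i).length = ℓ
      · rw [if_pos hlf, if_pos hlf]
        have E4 : sq⁻¹ - z * w - msc * w = 0 := by
          have h1 : sq⁻¹ - z * w - msc * w = sq⁻¹ * (1 + z * msc + msc ^ 2) := by
            rw [hwdef]; ring
          rw [h1, show (1 : ℂ) + z * msc + msc ^ 2 = 0 from by linear_combination hmsc,
            mul_zero]
        linear_combination (X⁻¹ * w ^ n) * E4
      · rw [if_neg hlf, if_neg hlf]
        have E3 : sq⁻¹ + ((d : ℂ) - 1) * sq⁻¹ * w ^ 2 - z * w = 0 := by
          have h1 : ((d : ℂ) - 1) * w ^ 2 = msc ^ 2 := by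
            rw [hwdef, ← hsq2, neg_sq, div_pow, mul_comm,
              div_mul_cancel₀ _ (pow_ne_zero 2 hsq0)]
          have h2 : sq⁻¹ + ((d : ℂ) - 1) * sq⁻¹ * w ^ 2 - z * w =
              sq⁻¹ * (1 + ((d : ℂ) - 1) * w ^ 2) - z * w := by ring
          rw [h2, h1, hwdef,
            show sq⁻¹ * (1 + msc ^ 2) - z * -(msc / sq) =
              sq⁻¹ * (1 + msc ^ 2 + z * msc) from by ring,
            show (1 : ℂ) + msc ^ 2 + z * msc = 0 from by linear_combination hmsc, mul_zero]
        linear_combination (X⁻¹ * w ^ n) * E3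
  constructor
  · exact (Matrix.isUnit_iff_isUnit_det _).mpr (Matrix.isUnit_det_of_right_inverse hMP)
  · intro i j
    rw [Matrix.inv_eq_right_inv hMP]
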